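/- Two words u and v over the same ordered alphabet are conjugate if and only if their Burrows-Wheeler transforms are equal. -/

import Mathlib

namespace BWTpaper

variable {A : Type*}

/-- Lexicographic `≤` (as a `Bool`) on lists, induced by a strict order `lt` on letters. -/
def lexLe (lt : A → A → Bool) : List A → List A → Bool
  | [], _ => true
  | _ :: _, [] => false
  | x :: xs, y :: ys => if lt x y then true else if lt y x then false else lexLe lt xs ys

/-- The list of all rotations (conjugates, with multiplicity) of a word. -/
def rotations (w : List A) : List (List A) := (List.range w.length).map (fun i => w.rotate i)

/-- Burrows-Wheeler transform with respect to a strict order `lt` on letters. -/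
def bwtBy (lt : A → A → Bool) (w : List A) : List A :=
  ((rotations w).mergeSort (lexLe lt)).filterMap List.getLast?

def stdLt [LinearOrder A] : A → A → Bool := fun x y => decide (x < y)

/-- Burrows-Wheeler transform w.r.t. the order of a `LinearOrder` alphabet. -/
def bwt [LinearOrder A] (w : List A) : List A := bwtBy stdLt w

def Conjugate (u v : List A) : Prop := ∃ x y : List A, u = x ++ y ∧ v = y ++ x

/-- `u^p`. -/
def wordPow (u : List A) (p : ℕ) : List A := (List.replicate p u).flatten

def Primitive (w : List A) : Prop := w ≠ [] ∧ ∀ (u : List A) (k : ℕ), w = wordPow u k → k = 1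

/-- The letters of the alphabet, sorted increasingly w.r.t. `lt`. -/
noncomputable def sortedAlphabet [Fintype A] (lt : A → A → Bool) : List A :=
  Finset.univ.toList.mergeSort (fun x y => !(lt y x))

/-- `w` is `π`-clustering w.r.t. the letter order `lt`:
its BWT is `π(a₁)^{k₁} ⋯ π(a_d)^{k_d}` where `a₁ < ⋯ < a_d` and `k_i = |w|_{π(a_i)}`. -/
def IsClusteringBy [Fintype A] [DecidableEq A] (lt : A → A → Bool) (π : Equiv.Perm A)
    (w : List A) : Prop :=
  bwtBy lt w = (sortedAlphabet lt).flatMap (fun c => List.replicate (w.count (π c)) (π c))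

def IsClustering [Fintype A] [LinearOrder A] (π : Equiv.Perm A) (w : List A) : Prop :=
  IsClusteringBy stdLt π w

/-- The prefix of length `n` of the periodic infinite word `u^ω`. -/
def omegaTake (u : List A) (n : ℕ) : List A := ((List.replicate n u).flatten).take n

/-- The ω-order: `u ≤_ω v` iff `u^ω ≤ v^ω` lexicographically (decided on the first
`|u| + |v|` letters, which suffices by Fine and Wilf). -/
def omegaLe (lt : A → A → Bool) (u v : List A) : Bool :=
  lexLe lt (omegaTake u (u.length + v.length)) (omegaTake v (u.length + v.length))

/-- Extended Burrows-Wheeler transform of a multiset (list) of words. -/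
def ebwtBy (lt : A → A → Bool) (W : List (List A)) : List A :=
  ((W.flatMap rotations).mergeSort (omegaLe lt)).filterMap List.getLast?

/-- A multiset of words is `π`-clustering if its eBWT consists of the blocks
`π(a₁)^{k₁} ⋯ π(a_d)^{k_d}` with `k_i` the total number of occurrences of `π(a_i)`. -/
def IsClusteringMultisetBy [Fintype A] [DecidableEq A] (lt : A → A → Bool)
    (π : Equiv.Perm A) (W : List (List A)) : Prop :=
  ebwtBy lt W =
    (sortedAlphabet lt).flatMap
      (fun c => List.replicate ((W.map (fun w => w.count (π c))).sum) (π c))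

/-- The morphism `α_{a,b} : a ↦ ab`, `c ↦ c` for `c ≠ a`. -/
def alphaM [DecidableEq A] (a b : A) (w : List A) : List A :=
  w.flatMap (fun c => if c = a then [a, b] else [c])

/-- The morphism `α̃_{a,b} : a ↦ ba`, `c ↦ c` for `c ≠ a`. -/
def tildeM [DecidableEq A] (a b : A) (w : List A) : List A :=
  w.flatMap (fun c => if c = a then [b, a] else [c])


set_option linter.unusedSectionVars false

section Lex
variable [LinearOrder A]

lemma lexLe_total : ∀ (a b : List A), lexLe stdLt a b || lexLe stdLt b a
  | [], _ => by simp [lexLe]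
  | _ :: _, [] => by simp [lexLe]
  | x :: xs, y :: ys => by
    simp only [lexLe, stdLt]
    rcases lt_trichotomy x y with h | rfl | h
    · simp [h]
    · simpa [lt_irrefl] using lexLe_total xs ys
    · simp [h, asymm h]

lemma lexLe_trans : ∀ (a b c : List A),
    lexLe stdLt a b → lexLe stdLt b c → lexLe stdLt a c
  | [], _, _ => by simp [lexLe]
  | x :: xs, [], _ => by simp [lexLe]
  | x :: xs, y :: ys, [] => by simp [lexLe]
  | x :: xs, y :: ys, z :: zs => by
    simp only [lexLe, stdLt]
    intro h1 h2
    rcases lt_trichotomy x y with hxy | rfl | hxy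
    · rcases lt_trichotomy y z with hyz | rfl | hyz
      · simp [hxy.trans hyz]
      · simp [hxy]
      · simp [hyz, asymm hyz] at h2
    · simp only [lt_irrefl, decide_false, Bool.false_eq_true, if_false] at h1
      rcases lt_trichotomy x z with hxz | rfl | hxz
      · simp [hxz]
      · simp only [lt_irrefl, decide_false, Bool.false_eq_true, if_false] at h2 ⊢
        exact lexLe_trans _ _ _ h1 h2
      · simp [hxz, asymm hxz] at h2
    · simp [hxy, asymm hxy] at h1

lemma lexLe_antisymm : ∀ (a b : List A),
    lexLe stdLt a b = true → lexLe stdLt b a = true → a = b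
  | [], [], _, _ => rfl
  | [], _ :: _, _, h => by simp [lexLe] at h
  | _ :: _, [], h, _ => by simp [lexLe] at h
  | x :: xs, y :: ys, h1, h2 => by
    simp only [lexLe, stdLt] at h1 h2
    rcases lt_trichotomy x y with hxy | rfl | hxy
    · simp [hxy, asymm hxy] at h2
    · simp only [lt_irrefl, decide_false, Bool.false_eq_true, if_false] at h1 h2
      rw [lexLe_antisymm xs ys h1 h2]
    · simp [hxy, asymm hxy] at h1

lemma lexLe_take : ∀ (k : ℕ) (a b : List A),
    lexLe stdLt a b = true → lexLe stdLt (a.take k) (b.take k) = true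
  | _, [], _, _ => by simp [lexLe]
  | 0, _, _, _ => by simp [lexLe]
  | k + 1, x :: xs, [], h => by simp [lexLe] at h
  | k + 1, x :: xs, y :: ys, h => by
    simp only [lexLe, stdLt, List.take_succ_cons] at h ⊢
    rcases lt_trichotomy x y with hxy | rfl | hxy
    · simp [hxy]
    · simp only [lt_irrefl, decide_false, Bool.false_eq_true, if_false] at h ⊢
      exact lexLe_take k xs ys h
    · simp [hxy, asymm hxy] at h

end Lex


section Rot

lemma rotations_length (w : List A) : (rotations w).length = w.length := by
  simp [rotations]

lemma length_of_mem_rotations {w r : List A} (h : r ∈ rotations w) : r.length = w.length := by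
  simp only [rotations, List.mem_map] at h
  obtain ⟨i, -, rfl⟩ := h
  exact List.length_rotate w i

lemma range_map_mod_perm (n m : ℕ) :
    List.Perm ((List.range n).map (fun i => (m + i) % n)) (List.range n) := by
  rcases Nat.eq_zero_or_pos n with rfl | hn
  · simp
  apply List.Subperm.perm_of_length_le
  · apply List.Nodup.subperm
    · apply List.Nodup.map_on _ List.nodup_range
      intro i hi j hj hij
      rw [List.mem_range] at hi hj
      have h1 : (m + i) % n = (m + j) % n := hij
      have h2 : i % n = j % n := Nat.ModEq.add_left_cancel' m h1
      rwa [Nat.mod_eq_of_lt hi, Nat.mod_eq_of_lt hj] at h2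
    · intro x hx
      simp only [List.mem_map, List.mem_range] at hx
      obtain ⟨i, -, rfl⟩ := hx
      exact List.mem_range.2 (Nat.mod_lt _ hn)
  · simp

lemma rotations_rotate_eq_map (w : List A) (m : ℕ) :
    rotations (w.rotate m) = ((List.range w.length).map (fun i => (m + i) % w.length)).map
      (fun j => w.rotate j) := by
  simp only [rotations, List.length_rotate, List.map_map]
  apply List.map_congr_left
  intro i _
  simp only [Function.comp]
  rw [List.rotate_rotate, List.rotate_mod]

lemma rotations_rotate_perm (w : List A) (m : ℕ) :
    List.Perm (rotations (w.rotate m)) (rotations w) := by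
  rw [rotations_rotate_eq_map]
  exact (range_map_mod_perm w.length m).map _

lemma map_rotate_rotations (w : List A) (m : ℕ) :
    (rotations w).map (fun r => r.rotate m) = rotations (w.rotate m) := by
  simp only [rotations, List.length_rotate, List.map_map]
  apply List.map_congr_left
  intro i _
  simp only [Function.comp]
  rw [List.rotate_rotate, List.rotate_rotate, Nat.add_comm]

end Rot


section Main
variable [LinearOrder A]

lemma sorted_mergeSort'' (l : List (List A)) :
    (l.mergeSort (lexLe stdLt)).Pairwise (fun a b => lexLe stdLt a b = true) :=
  List.pairwise_mergeSort lexLe_trans lexLe_total l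

lemma eq_mergeSort_of_perm_of_sorted {s l : List (List A)}
    (hp : List.Perm s l) (hs : s.Pairwise (fun a b => lexLe stdLt a b = true)) :
    s = l.mergeSort (lexLe stdLt) := by
  haveI : IsAntisymm (List A) (fun a b => lexLe stdLt a b = true) := ⟨lexLe_antisymm⟩
  exact List.Perm.eq_of_pairwise (fun a b _ _ h1 h2 => lexLe_antisymm a b h1 h2) hs
    (sorted_mergeSort'' l) (hp.trans (List.mergeSort_perm l _).symm)

lemma mergeSort_eq_of_perm {l l' : List (List A)} (h : List.Perm l l') :
    l.mergeSort (lexLe stdLt) = l'.mergeSort (lexLe stdLt) :=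
  eq_mergeSort_of_perm_of_sorted ((List.mergeSort_perm l _).trans h) (sorted_mergeSort'' l)

lemma rotate_pred_eq {r : List A} (hr : r ≠ []) :
    r.rotate (r.length - 1) = r.getLast hr :: r.dropLast := by
  have h := List.dropLast_append_getLast hr
  have hl : r.dropLast.length = r.length - 1 := List.length_dropLast
  calc r.rotate (r.length - 1)
      = (r.dropLast ++ [r.getLast hr]).rotate r.dropLast.length := by rw [hl, h]
    _ = [r.getLast hr] ++ r.dropLast := by
        rw [List.rotate_eq_drop_append_take (by simp), List.drop_left, List.take_left]
    _ = r.getLast hr :: r.dropLast := rfl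

lemma take_rotate_last {r : List A} (hr : r ≠ []) {k : ℕ} (hk : k < r.length) :
    (r.rotate (r.length - 1)).take (k + 1) = r.getLast hr :: r.take k := by
  rw [rotate_pred_eq hr, List.take_succ_cons, List.dropLast_eq_take, List.take_take]
  rw [min_eq_left (show k ≤ r.length - 1 by omega)]

lemma filterMap_getLast?_eq_map [Inhabited A] {l : List (List A)} (h : ∀ r ∈ l, r ≠ []) :
    l.filterMap List.getLast? = l.map (fun r => r.getLast?.iget) := by
  induction l with
  | nil => rfl
  | cons a t ih =>
    have ha := List.getLast?_eq_getLast (h a List.mem_cons_self)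
    simp [List.filterMap_cons, ha, ih (fun r hr => h r (List.mem_cons_of_mem a hr))]

lemma bwt_length (w : List A) : (bwt w).length = w.length := by
  rcases w with _ | ⟨a, t⟩
  · simp [bwt, bwtBy, rotations]
  · haveI : Inhabited A := ⟨a⟩
    have hne : ∀ r ∈ (rotations (a :: t)).mergeSort (lexLe stdLt), r ≠ [] := by
      intro r hr
      have := length_of_mem_rotations (List.mem_mergeSort.1 hr)
      intro hnil
      rw [hnil] at this
      simp at this
    rw [bwt, bwtBy, filterMap_getLast?_eq_map hne, List.length_map, List.length_mergeSort,
      rotations_length]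

def recon (L : List A) : ℕ → List (List A)
  | 0 => List.replicate L.length []
  | k + 1 => (List.zipWith (fun a p => a :: p) L (recon L k)).mergeSort (lexLe stdLt)

lemma recon_eq [Inhabited A] {w : List A} (hw : w ≠ []) :
    ∀ k, k ≤ w.length →
      recon (bwt w) k = ((rotations w).mergeSort (lexLe stdLt)).map (List.take k) := by
  set R := (rotations w).mergeSort (lexLe stdLt) with hRdef
  have hlen : ∀ r ∈ R, r.length = w.length := fun r hr =>
    length_of_mem_rotations (List.mem_mergeSort.1 hr)
  have hne : ∀ r ∈ R, r ≠ [] := by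
    intro r hr hnil
    have := hlen r hr
    rw [hnil] at this
    exact hw (List.length_eq_zero_iff.1 this.symm)
  have hbwt : bwt w = R.map (fun r => r.getLast?.iget) := by
    rw [bwt, bwtBy]
    exact filterMap_getLast?_eq_map hne
  intro k
  induction k with
  | zero =>
    intro _
    have h0 : R.map (List.take 0) = List.map (fun _ => ([] : List A)) R :=
      List.map_congr_left (fun r _ => List.take_zero)
    rw [recon, hbwt, List.length_map, h0, List.map_const']
  | succ k ih =>
    intro hk
    have hk' : k ≤ w.length := Nat.le_of_succ_le hk
    rw [recon, ih hk', hbwt,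
      List.zipWith_map, List.zipWith_self]
    symm
    apply eq_mergeSort_of_perm_of_sorted
    · have h1 : R.map (fun r => r.getLast?.iget :: r.take k)
          = (R.map (fun r => r.rotate (w.length - 1))).map (List.take (k + 1)) := by
        rw [List.map_map]
        apply List.map_congr_left
        intro r hr
        have hrne := hne r hr
        have hrlen := hlen r hr
        have hklt : k < r.length := by rw [hrlen]; omega
        simp only [Function.comp]
        rw [← hrlen, take_rotate_last hrne hklt]
        simp [List.getLast?_eq_getLast hrne]
      have h2 : List.Perm (R.map (fun r => r.rotate (w.length - 1))) R := by
        have p1 := (List.mergeSort_perm (rotations w) (lexLe stdLt)).map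
          (fun r => r.rotate (w.length - 1))
        rw [map_rotate_rotations] at p1
        exact (p1.trans (rotations_rotate_perm w _)).trans
          (List.mergeSort_perm (rotations w) (lexLe stdLt)).symm
      rw [h1]
      exact (h2.map (List.take (k + 1))).symm
    · exact (sorted_mergeSort'' (rotations w)).map _ (fun a b hab => lexLe_take (k + 1) a b hab)

lemma map_take_length_eq {w : List A} :
    ((rotations w).mergeSort (lexLe stdLt)).map (List.take w.length)
      = (rotations w).mergeSort (lexLe stdLt) := by
  have h : ∀ r ∈ (rotations w).mergeSort (lexLe stdLt), List.take w.length r = id r := by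
    intro r hr
    have := length_of_mem_rotations (List.mem_mergeSort.1 hr)
    show List.take w.length r = r
    rw [← this]
    exact List.take_length
  rw [List.map_congr_left h, List.map_id]

end Main

/-- Two words over the same ordered alphabet are conjugate iff their BWTs are equal. -/
theorem conjugate_iff_bwt_eq [LinearOrder A] (u v : List A) :
    Conjugate u v ↔ bwt u = bwt v := by
  constructor
  · rintro ⟨x, y, rfl, rfl⟩
    have h : y ++ x = (x ++ y).rotate x.length := by
      rw [List.rotate_eq_drop_append_take (by simp), List.drop_left, List.take_left]
    rw [bwt, bwt, bwtBy, bwtBy]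
    congr 1
    rw [h]
    exact (mergeSort_eq_of_perm (rotations_rotate_perm (x ++ y) x.length)).symm
  · intro h
    by_cases hu : u = []
    · have hv : v.length = 0 := by
        rw [← bwt_length v, ← h, bwt_length, hu]
        rfl
      rw [hu, List.length_eq_zero_iff.1 hv]
      exact ⟨[], [], rfl, rfl⟩
    · have hlen : u.length = v.length := by rw [← bwt_length u, ← bwt_length v, h]
      have hv : v ≠ [] := by
        intro hnil
        apply hu
        apply List.length_eq_zero_iff.1
        rw [hlen, hnil]
        rfl
      haveI : Inhabited A := ⟨u.head hu⟩
      have h1 := recon_eq hu u.length le_rfl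
      have h2 := recon_eq hv v.length le_rfl
      rw [h] at h1
      have h3 : ((rotations u).mergeSort (lexLe stdLt)).map (List.take u.length)
          = ((rotations v).mergeSort (lexLe stdLt)).map (List.take v.length) := by
        rw [← h1, ← h2, hlen]
      rw [map_take_length_eq, map_take_length_eq] at h3
      have hperm : List.Perm (rotations u) (rotations v) := by
        refine (List.mergeSort_perm (rotations u) (lexLe stdLt)).symm.trans ?_
        rw [h3]
        exact List.mergeSort_perm (rotations v) (lexLe stdLt)
      have humem : u ∈ rotations u := by
        refine List.mem_map.2 ⟨0, List.mem_range.2 ?_, List.rotate_zero u⟩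
        exact List.length_pos_iff.2 hu
      have hvmem : u ∈ rotations v := hperm.subset humem
      obtain ⟨i, -, hi⟩ := List.mem_map.1 hvmem
      have hle : i % v.length ≤ v.length := le_of_lt (Nat.mod_lt _ (List.length_pos_iff.2 hv))
      refine ⟨v.drop (i % v.length), v.take (i % v.length), ?_,
        (List.take_append_drop _ v).symm⟩
      rw [← hi, ← List.rotate_mod, List.rotate_eq_drop_append_take hle]

end BWTpaper
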